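/- (Spectral aggregation recovers BTL strengths.) Let n ≥ 2, let s₁,…,s_n > 0, and set p_ij = s_j/(s_i + s_j) for i ≠ j and p_ii = 0. Define the matrix T by T_ij = p_ij/(n−1) for i ≠ j and T_ii = 1 − (1/(n−1)) Σ_{k≠i} p_ik. Then T is a row-stochastic matrix (all entries are nonnegative and each row sums to 1), and the probability vector π with π_i = s_i / (s₁ + ⋯ + s_n) satisfies the detailed-balance relations π_i T_ij = π_j T_ji for all i, j, hence is a stationary distribution of T: Σ_i π_i T_ij = π_j for every j. -/

import Mathlib

/-- spectral aggregation recovers BTL strengths: given strengths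
`s₁, …, s_n > 0` and BTL preferences `p_ij = s_j/(s_i + s_j)` (with `p_ii = 0`),
the matrix `T` with `T_ij = p_ij/(n-1)` for `i ≠ j` and
`T_ii = 1 - (1/(n-1)) Σ_{k≠i} p_ik` is row-stochastic, and the probability
vector `π_i = s_i / Σ_k s_k` satisfies detailed balance `π_i T_ij = π_j T_ji`
and is stationary: `Σ_i π_i T_ij = π_j` for all `j`. -/
theorem spectral_recovers_BTL {n : ℕ} (hn : 2 ≤ n) (s : Fin n → ℝ)
    (hs : ∀ i, 0 < s i)
    (p : Fin n → Fin n → ℝ)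
    (hp : ∀ i j : Fin n, p i j = if i = j then 0 else s j / (s i + s j))
    (T : Fin n → Fin n → ℝ)
    (hT : ∀ i j : Fin n, T i j =
      if i = j then 1 - (1 / ((n : ℝ) - 1)) * ∑ k ∈ Finset.univ.erase i, p i k
      else p i j / ((n : ℝ) - 1))
    (π : Fin n → ℝ) (hπ : ∀ i, π i = s i / ∑ k, s k) :
    (∀ i j : Fin n, 0 ≤ T i j) ∧
    (∀ i : Fin n, ∑ j, T i j = 1) ∧
    (∀ i, 0 ≤ π i) ∧ (∑ i, π i) = 1 ∧
    (∀ i j : Fin n, π i * T i j = π j * T j i) ∧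
    (∀ j : Fin n, ∑ i, π i * T i j = π j) := by
  have hn1 : (0:ℝ) < (n:ℝ) - 1 := by
    have : (2:ℝ) ≤ (n:ℝ) := by exact_mod_cast hn
    linarith
  have hS : (0:ℝ) < ∑ k, s k := by
    have h0 : 0 < n := lt_of_lt_of_le (by norm_num) hn
    exact Finset.sum_pos (fun i _ => hs i) ⟨⟨0, h0⟩, Finset.mem_univ _⟩
  have hp_nonneg : ∀ i j, 0 ≤ p i j := by
    intro i j
    rw [hp]
    split
    · exact le_refl 0
    · have h1 := hs i; have h2 := hs j; positivity
  have hp_le_one : ∀ i j, p i j ≤ 1 := by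
    intro i j
    rw [hp]
    split
    · norm_num
    · have h1 := hs i; have h2 := hs j
      rw [div_le_one (by linarith)]; linarith
  -- nonnegativity of T
  have hTnn : ∀ i j : Fin n, 0 ≤ T i j := by
    intro i j
    rw [hT]
    split
    · have hcard : ((Finset.univ.erase i).card : ℝ) = (n:ℝ) - 1 := by
        rw [Finset.card_erase_of_mem (Finset.mem_univ i)]
        simp
        have h0 : 1 ≤ n := le_trans (by norm_num) hn
        push_cast [Nat.cast_sub h0]
        ring
      have hsum : ∑ k ∈ Finset.univ.erase i, p i k ≤ (n:ℝ) - 1 := by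
        calc ∑ k ∈ Finset.univ.erase i, p i k
            ≤ ∑ k ∈ Finset.univ.erase i, 1 := Finset.sum_le_sum (fun k _ => hp_le_one i k)
          _ = ((Finset.univ.erase i).card : ℝ) := by simp
          _ = (n:ℝ) - 1 := hcard
      have : (1 / ((n:ℝ) - 1)) * ∑ k ∈ Finset.univ.erase i, p i k ≤ 1 := by
        rw [one_div, inv_mul_le_iff₀ hn1]
        linarith
      linarith
    · exact div_nonneg (hp_nonneg i j) (le_of_lt hn1)
  -- row sums
  have hrow : ∀ i : Fin n, ∑ j, T i j = 1 := by
    intro i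
    rw [← Finset.add_sum_erase Finset.univ (fun j => T i j) (Finset.mem_univ i)]
    have h1 : T i i = 1 - (1 / ((n:ℝ) - 1)) * ∑ k ∈ Finset.univ.erase i, p i k := by
      rw [hT]; simp
    have h2 : ∑ j ∈ Finset.univ.erase i, T i j
        = (∑ k ∈ Finset.univ.erase i, p i k) / ((n:ℝ) - 1) := by
      rw [Finset.sum_div]
      refine Finset.sum_congr rfl (fun j hj => ?_)
      rw [hT, if_neg (Ne.symm (Finset.ne_of_mem_erase hj))]
    rw [h1, h2]
    field_simp
    ring
  have hπnn : ∀ i, 0 ≤ π i := fun i => by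
    rw [hπ]; exact div_nonneg (le_of_lt (hs i)) (le_of_lt hS)
  have hπsum : (∑ i, π i) = 1 := by
    have : ∑ i, π i = (∑ i, s i) / (∑ k, s k) := by
      rw [Finset.sum_div]; exact Finset.sum_congr rfl (fun i _ => hπ i)
    rw [this, div_self (ne_of_gt hS)]
  have hdb : ∀ i j : Fin n, π i * T i j = π j * T j i := by
    intro i j
    by_cases h : i = j
    · rw [h]
    · rw [hT, hT, if_neg h, if_neg (Ne.symm h), hπ, hπ, hp, hp, if_neg h,
        if_neg (Ne.symm h)]
      have h1 := hs i; have h2 := hs j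
      have hij : s i + s j ≠ 0 := by linarith
      have hji : s j + s i ≠ 0 := by linarith
      field_simp
      ring
  refine ⟨hTnn, hrow, hπnn, hπsum, hdb, fun j => ?_⟩
  calc ∑ i, π i * T i j = ∑ i, π j * T j i := Finset.sum_congr rfl (fun i _ => hdb i j)
    _ = π j * ∑ i, T j i := by rw [Finset.mul_sum]
    _ = π j := by rw [hrow j, mul_one]
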